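/- Let T : ℕ → ℕ satisfy T(n) ≤ T(n-1) + T(n-d) for n ≥ d and T(n) ≤ 1 for n < d, where d ≥ 2. Then T(n) ≤ ∑_{i=0}^{⌈n/d⌉} C(n,i); in particular, T(n) ≤ (n/d + 1) · C(n, ⌈n/d⌉). -/

import Mathlib

open Finset

private lemma choose_mono_right {n : ℕ} : ∀ {i j : ℕ}, i ≤ j → 2 * j ≤ n + 1 →
    n.choose i ≤ n.choose j := by
  intro i j
  induction j with
  | zero => intro h _; rw [Nat.le_zero.mp h]
  | succ j ih =>
    intro hij hj
    rcases Nat.lt_succ_iff.mp (Nat.lt_succ_of_le hij) with h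
    rcases Nat.lt_or_ge i (j + 1) with h' | h'
    · have step : n.choose j ≤ n.choose (j + 1) := by
        rcases Nat.lt_or_ge (2 * (j + 1)) (n + 1) with h2 | h2
        · exact Nat.choose_le_succ_of_lt_half_left (by omega)
        · -- 2*(j+1) = n+1, so n = 2*j+1 and the two are equal by symmetry
          have hn : n = 2 * j + 1 := by omega
          have hle : j + 1 ≤ n := by omega
          have := Nat.choose_symm hle
          have hsub : n - (j + 1) = j := by omega
          rw [hsub] at this
          exact this.le
      exact le_trans (ih (by omega) (by omega)) step
    · have : i = j + 1 := by omega
      rw [this]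

private lemma pascal_sum (m k : ℕ) :
    ∑ i ∈ range (k + 1), (m + 1).choose i
      = ∑ i ∈ range (k + 1), m.choose i + ∑ i ∈ range k, m.choose i := by
  induction k with
  | zero => simp
  | succ k ih =>
    rw [Finset.sum_range_succ, ih, Nat.choose_succ_succ,
      Finset.sum_range_succ (fun i => m.choose i) (k + 1),
      Finset.sum_range_succ (fun i => m.choose i) k]
    ring

private lemma ceil_eq (d n : ℕ) (hd : 2 ≤ d) (hn : 1 ≤ n) :
    (n + d - 1) / d = (n - 1) / d + 1 := by
  have h : n + d - 1 = (n - 1) + d := by omega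
  rw [h, Nat.add_div_right _ (by omega)]

private lemma sum_bound (d : ℕ) (hd : 2 ≤ d) (T : ℕ → ℕ)
    (h1 : ∀ n, n < d → T n ≤ 1)
    (h2 : ∀ n, d ≤ n → T n ≤ T (n - 1) + T (n - d)) :
    ∀ n, T n ≤ ∑ i ∈ Finset.range ((n + d - 1) / d + 1), n.choose i := by
  intro n
  induction n using Nat.strong_induction_on with
  | _ n ih =>
    rcases lt_or_ge n d with hn | hn
    · calc T n ≤ 1 := h1 n hn
        _ = n.choose 0 := by simp
        _ ≤ _ := Finset.single_le_sum (f := fun i => n.choose i)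
            (fun i _ => Nat.zero_le _)
            (Finset.mem_range.mpr (Nat.succ_pos _))
    · set k := (n + d - 1) / d with hk
      have hn1 : 1 ≤ n := by omega
      have hkeq : k = (n - 1) / d + 1 := ceil_eq d n hd hn1
      have hk1 : 1 ≤ k := hkeq ▸ Nat.le_add_left 1 _
      have hknd : (n - d + d - 1) / d = k - 1 := by
        have h : n - d + d - 1 = n - 1 := by omega
        rw [h, hkeq]; omega
      have hkn1 : (n - 1 + d - 1) / d ≤ k := by
        rw [hk]; exact Nat.div_le_div_right (by omega)
      have b1 : T (n - 1) ≤ ∑ i ∈ range (k + 1), (n - 1).choose i := by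
        refine le_trans (ih (n - 1) (by omega)) ?_
        exact Finset.sum_le_sum_of_subset (Finset.range_subset_range.mpr (by omega))
      have b2 : T (n - d) ≤ ∑ i ∈ range k, (n - 1).choose i := by
        refine le_trans (ih (n - d) (by omega)) ?_
        rw [hknd]
        have hr : k - 1 + 1 = k := by omega
        rw [hr]
        exact Finset.sum_le_sum fun i _ => Nat.choose_le_choose i (by omega)
      have key := pascal_sum (n - 1) k
      have hnn : n - 1 + 1 = n := by omega
      rw [hnn] at key
      calc T n ≤ T (n - 1) + T (n - d) := h2 n hn
        _ ≤ _ := by rw [key]; exact Nat.add_le_add b1 b2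

theorem branching_recurrence_bound (d : ℕ) (hd : 2 ≤ d) (T : ℕ → ℕ)
    (h1 : ∀ n, n < d → T n ≤ 1)
    (h2 : ∀ n, d ≤ n → T n ≤ T (n - 1) + T (n - d)) :
    ∀ n, T n ≤ ∑ i ∈ Finset.range ((n + d - 1) / d + 1), n.choose i ∧
      (T n : ℝ) ≤ ((n : ℝ) / d + 1) * (n.choose ((n + d - 1) / d)) := by
  intro n
  have hs := sum_bound d hd T h1 h2 n
  refine ⟨hs, ?_⟩
  set k := (n + d - 1) / d with hk
  have hdpos : (0 : ℝ) < d := by positivity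
  have hkn : k ≤ n := by
    rcases Nat.eq_zero_or_pos n with h0 | h0
    · have : k = 0 := by rw [hk, h0]; exact Nat.div_eq_of_lt (by omega)
      omega
    · have h := ceil_eq d n hd h0
      have h2' := Nat.div_le_self (n - 1) d
      omega
  have hC1 : 1 ≤ n.choose k := Nat.choose_pos hkn
  have hC1r : (1 : ℝ) ≤ (n.choose k : ℝ) := by exact_mod_cast hC1
  have hCpos : (0 : ℝ) ≤ (n.choose k : ℝ) := by positivity
  rcases lt_or_ge n d with hn | hn
  · have hT : (T n : ℝ) ≤ 1 := by exact_mod_cast h1 n hn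
    have hnd : (0 : ℝ) ≤ (n : ℝ) / d := by positivity
    nlinarith
  · have hn1 : 1 ≤ n := by omega
    have hkeq : k = (n - 1) / d + 1 := ceil_eq d n hd hn1
    have hk1 : 1 ≤ k := hkeq ▸ Nat.le_add_left 1 _
    have hkle : 2 * k ≤ n + 1 := by
      have e2 : (n - 1) / d ≤ (n - 1) / 2 := Nat.div_le_div_left hd (by omega)
      generalize hq : (n - 1) / d = q at hkeq e2
      omega
    have hsum : ∑ i ∈ range (k + 1), n.choose i ≤ 1 + k * n.choose k := by
      rw [Finset.sum_range_succ' (fun i => n.choose i) k]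
      simp only [Nat.choose_zero_right]
      rw [Nat.add_comm]
      apply Nat.add_le_add_left
      calc ∑ i ∈ range k, n.choose (i + 1)
          ≤ ∑ _i ∈ range k, n.choose k :=
            Finset.sum_le_sum fun i hi => choose_mono_right
              (by simpa using Finset.mem_range.mp hi) hkle
        _ = k * n.choose k := by simp [Finset.sum_const, mul_comm]
    have hTn : (T n : ℝ) ≤ 1 + (k : ℝ) * n.choose k := by
      have := le_trans hs hsum
      exact_mod_cast this
    refine le_trans hTn ?_
    have hCd : (d : ℝ) ≤ (n.choose k : ℝ) := by
      have : d ≤ n.choose k := by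
        calc d ≤ n := hn
          _ = n.choose 1 := (Nat.choose_one_right n).symm
          _ ≤ n.choose k := choose_mono_right hk1 hkle
      exact_mod_cast this
    have hkreal : (k : ℝ) * d ≤ (n : ℝ) + d - 1 := by
      have h2' : k * d ≤ n + d - 1 := Nat.div_mul_le_self (n + d - 1) d
      have h3 : ((k * d : ℕ) : ℝ) ≤ ((n + d - 1 : ℕ) : ℝ) := by exact_mod_cast h2'
      rw [Nat.cast_sub (by omega)] at h3
      push_cast at h3
      linarith
    have hgap : (1 : ℝ) / d ≤ (n : ℝ) / d + 1 - k := by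
      rw [div_le_iff₀ hdpos, sub_mul, add_mul, div_mul_cancel₀ _ (ne_of_gt hdpos)]
      linarith
    have h1C : (1 : ℝ) ≤ ((n : ℝ) / d + 1 - k) * n.choose k := by
      calc (1 : ℝ) = (1 / d) * d := by field_simp
        _ ≤ (1 / d) * n.choose k := mul_le_mul_of_nonneg_left hCd (by positivity)
        _ ≤ ((n : ℝ) / d + 1 - k) * n.choose k := mul_le_mul_of_nonneg_right hgap hCpos
    nlinarith
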